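/- arXiv:2107.13726 — 3 statements merged into one kernel-verified Lean document; each statement's English description precedes it below -/
import Mathlib

section
/- Let R be a complete Noetherian local ring with maximal ideal m and finite residue field, M a finitely generated R-module, and u an R-linear endomorphism of M. Then the sequence (u^{n!})_{n≥1} converges in End_R(M) for the m-adic topology, its limit e is an idempotent commuting with u, u restricts to an automorphism of eM, and on (1−e)M the powers of u tend to 0 m-adically. -/
section Aux

variable {R : Type*} [CommRing R]

lemma hida_mul_mem_left {A : Type*} [Ring A] [Algebra R A] {I : Ideal R}
    (b : A) {a : A} (ha : a ∈ I • (⊤ : Submodule R A)) : b * a ∈ I • (⊤ : Submodule R A) := by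
  refine Submodule.smul_induction_on ha (fun r hr x _ => ?_) (fun x y hx hy => ?_)
  · rw [mul_smul_comm]; exact Submodule.smul_mem_smul hr trivial
  · rw [mul_add]; exact add_mem hx hy

lemma hida_mul_mem_right {A : Type*} [Ring A] [Algebra R A] {I : Ideal R}
    (b : A) {a : A} (ha : a ∈ I • (⊤ : Submodule R A)) : a * b ∈ I • (⊤ : Submodule R A) := by
  refine Submodule.smul_induction_on ha (fun r hr x _ => ?_) (fun x y hx hy => ?_)
  · rw [smul_mul_assoc]; exact Submodule.smul_mem_smul hr trivial
  · rw [add_mul]; exact add_mem hx hy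

lemma hida_mul_sub_mem {A : Type*} [Ring A] [Algebra R A] {I : Ideal R}
    {x x' y y' : A} (hx : x - x' ∈ I • (⊤ : Submodule R A))
    (hy : y - y' ∈ I • (⊤ : Submodule R A)) : x * y - x' * y' ∈ I • (⊤ : Submodule R A) := by
  have h : x * y - x' * y' = x * (y - y') + (x - x') * y' := by rw [mul_sub, sub_mul]; abel
  rw [h]
  exact add_mem (hida_mul_mem_left x hy) (hida_mul_mem_right y' hx)

lemma hida_apply_mem {M : Type*} [AddCommGroup M] [Module R M] {I : Ideal R}
    {f : Module.End R M} (hf : f ∈ I • (⊤ : Submodule R (Module.End R M))) (x : M) :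
    f x ∈ I • (⊤ : Submodule R M) := by
  refine Submodule.smul_induction_on hf (fun r hr g _ => ?_) (fun g h hg hh => ?_)
  · exact Submodule.smul_mem_smul hr trivial
  · exact add_mem hg hh

end Aux

section Fin1

variable {R : Type*} [CommRing R] [IsLocalRing R] [Finite (IsLocalRing.ResidueField R)]

lemma hida_finite_smul_quot (M : Type*) [AddCommGroup M] [Module R M] [Module.Finite R M] :
    Finite (M ⧸ (IsLocalRing.maximalIdeal R • ⊤ : Submodule R M)) := by
  have h1 : Module.Finite (R ⧸ IsLocalRing.maximalIdeal R)
      (M ⧸ (IsLocalRing.maximalIdeal R • ⊤ : Submodule R M)) :=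
    Module.Finite.of_restrictScalars_finite R _ _
  have h2 : Finite (R ⧸ IsLocalRing.maximalIdeal R) := ‹Finite (IsLocalRing.ResidueField R)›
  exact Module.finite_of_finite (R ⧸ IsLocalRing.maximalIdeal R)

end Fin1

lemma hida_finite_pow_quot (R : Type*) [CommRing R] [IsNoetherianRing R] [IsLocalRing R]
    [Finite (IsLocalRing.ResidueField R)] :
    ∀ (k : ℕ) (M : Type*) [AddCommGroup M] [Module R M] [Module.Finite R M],
      Finite (M ⧸ ((IsLocalRing.maximalIdeal R) ^ k • ⊤ : Submodule R M))
  | 0, M, _, _, _ => by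
    have h : ((IsLocalRing.maximalIdeal R) ^ 0 • ⊤ : Submodule R M) = ⊤ := by simp
    have : Subsingleton (M ⧸ ((IsLocalRing.maximalIdeal R) ^ 0 • ⊤ : Submodule R M)) := by
      rw [h]; infer_instance
    exact Finite.of_subsingleton
  | (k + 1), M, _, _, _ => by
    set I := IsLocalRing.maximalIdeal R with hI
    set S : Submodule R M := I ^ (k + 1) • ⊤ with hS
    set T : Submodule R M := I ^ k • ⊤ with hT
    have hST : S ≤ T :=
      Submodule.smul_mono_left (Ideal.pow_le_pow_right (Nat.le_succ k))
    set B : Submodule R (M ⧸ S) := T.map S.mkQ with hB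
    have hQfin : Finite ((M ⧸ S) ⧸ B) := by
      have := hida_finite_pow_quot R k M
      exact Finite.of_equiv _ (Submodule.quotientQuotientEquivQuotient S T hST).symm.toEquiv
    have hBfg : Module.Finite R B := by
      have : IsNoetherian R (M ⧸ S) := inferInstance
      infer_instance
    have hBkill : (IsLocalRing.maximalIdeal R • ⊤ : Submodule R B) = ⊥ := by
      rw [eq_bot_iff]
      refine Submodule.smul_le.mpr fun r hr b _ => ?_
      obtain ⟨b, hbB⟩ := b
      obtain ⟨t, htT, rfl⟩ := hbB
      rw [Submodule.mem_bot]
      ext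
      show r • S.mkQ t = 0
      rw [← map_smul, Submodule.mkQ_apply, Submodule.Quotient.mk_eq_zero]
      have : r • t ∈ I • T := Submodule.smul_mem_smul hr htT
      rwa [hT, ← Submodule.smul_assoc, Ideal.smul_eq_mul, ← pow_succ'] at this
    have hBfin : Finite B := by
      have := hida_finite_smul_quot (R := R) B
      exact Finite.of_equiv _ (Submodule.quotEquivOfEqBot _ hBkill).toEquiv
    exact @Finite.of_addSubgroup_quotient _ _ B.toAddSubgroup hBfin hQfin

section Prec

variable {R : Type*} [CommRing R] (I : Ideal R)

lemma hida_prec_pi [IsAdicComplete I R] (n : ℕ) (g : ℕ → Fin n → R)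
    (hg : ∀ {a b : ℕ}, a ≤ b → g b - g a ∈ (I ^ a • ⊤ : Submodule R (Fin n → R))) :
    ∃ L, ∀ a, g a - L ∈ (I ^ a • ⊤ : Submodule R (Fin n → R)) := by
  have hcomp : ∀ i : Fin n, ∃ Li : R, ∀ a, g a i - Li ∈ (I ^ a • ⊤ : Submodule R R) := by
    intro i
    have hc : ∀ {a b : ℕ}, a ≤ b →
        (fun m => g m i) a ≡ (fun m => g m i) b [SMOD (I ^ a • ⊤ : Submodule R R)] := by
      intro a b hab
      rw [SModEq.sub_mem]
      have := hg hab
      have h2 : (LinearMap.proj i : (Fin n → R) →ₗ[R] R) (g b - g a) ∈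
          (I ^ a • ⊤ : Submodule R (Fin n → R)).map (LinearMap.proj i) :=
        Submodule.mem_map_of_mem this
      rw [Submodule.map_smul''] at h2
      have h3 : g b i - g a i ∈ I ^ a • (⊤ : Submodule R (Fin n → R)).map (LinearMap.proj i) := by
        simpa using h2
      have h4 := Submodule.smul_mono (le_refl (I ^ a)) le_top h3
      exact neg_mem_iff.mp (by simpa using h4)
    obtain ⟨Li, hLi⟩ := IsPrecomplete.prec (IsAdicComplete.toIsPrecomplete (I := I) (M := R)) hc
    exact ⟨Li, fun a => (SModEq.sub_mem).mp (hLi a)⟩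
  choose L hL using hcomp
  refine ⟨L, fun a => ?_⟩
  have h0 : g a - L = ∑ i : Fin n, Pi.single i ((g a - L) i) :=
    (Finset.univ_sum_single (g a - L)).symm
  rw [h0]
  refine Submodule.sum_mem _ fun i _ => ?_
  have h5 : (g a - L) i ∈ (I ^ a • ⊤ : Submodule R R) := hL i a
  have h6 : (LinearMap.single R (fun _ : Fin n => R) i) ((g a - L) i) ∈
      (I ^ a • ⊤ : Submodule R R).map (LinearMap.single R (fun _ : Fin n => R) i) :=
    Submodule.mem_map_of_mem h5
  rw [Submodule.map_smul''] at h6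
  have h7 := Submodule.smul_mono (le_refl (I ^ a)) le_top h6
  simpa using h7

lemma hida_prec [IsAdicComplete I R] (M : Type*) [AddCommGroup M] [Module R M]
    [Module.Finite R M] (f : ℕ → M)
    (hf : ∀ {a b : ℕ}, a ≤ b → f b - f a ∈ (I ^ a • ⊤ : Submodule R M)) :
    ∃ L, ∀ a, f a - L ∈ (I ^ a • ⊤ : Submodule R M) := by
  obtain ⟨n, π, hπ⟩ := Module.Finite.exists_fin' R M
  have hmap : ∀ a : ℕ,
      (I ^ a • ⊤ : Submodule R (Fin n → R)).map π = (I ^ a • ⊤ : Submodule R M) := by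
    intro a
    rw [Submodule.map_smul'', Submodule.map_top, LinearMap.range_eq_top.mpr hπ]
  have hδ : ∀ a : ℕ, ∃ d : Fin n → R, d ∈ (I ^ a • ⊤ : Submodule R (Fin n → R)) ∧
      π d = f (a + 1) - f a := by
    intro a
    have : f (a + 1) - f a ∈ (I ^ a • ⊤ : Submodule R (Fin n → R)).map π := by
      rw [hmap]; exact hf (Nat.le_succ a)
    obtain ⟨d, hd, hd2⟩ := this
    exact ⟨d, hd, hd2⟩
  choose δ hδ1 hδ2 using hδ
  obtain ⟨g0, hg0⟩ := hπ (f 0)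
  let g : ℕ → Fin n → R := fun a => Nat.rec g0 (fun b gb => gb + δ b) a
  have hgπ : ∀ a, π (g a) = f a := by
    intro a
    induction a with
    | zero => exact hg0
    | succ b ih =>
      show π (g b + δ b) = f (b + 1)
      rw [map_add, ih, hδ2 b]; abel
  have hgc : ∀ {a b : ℕ}, a ≤ b → g b - g a ∈ (I ^ a • ⊤ : Submodule R (Fin n → R)) := by
    intro a b hab
    induction b, hab using Nat.le_induction with
    | base => simpa using Submodule.zero_mem _
    | succ b hab ih =>
      have h : g (b + 1) - g a = (g b - g a) + δ b := by
        show (g b + δ b) - g a = (g b - g a) + δ b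
        abel
      rw [h]
      exact add_mem ih (Submodule.smul_mono_left (Ideal.pow_le_pow_right hab) (hδ1 b))
  obtain ⟨L0, hL0⟩ := hida_prec_pi I n g hgc
  refine ⟨π L0, fun a => ?_⟩
  have h : f a - π L0 = π (g a - L0) := by rw [map_sub, hgπ]
  rw [h, ← hmap a]
  exact Submodule.mem_map_of_mem (hL0 a)

end Prec

lemma hida_finite_end (R : Type*) [CommRing R] [IsNoetherianRing R]
    (M : Type*) [AddCommGroup M] [Module R M] [Module.Finite R M] :
    Module.Finite R (Module.End R M) := by
  obtain ⟨n, s, hs⟩ := Module.Finite.exists_fin (R := R) (M := M)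
  let Φ : Module.End R M →ₗ[R] (Fin n → M) :=
    LinearMap.pi fun i => LinearMap.applyₗ (s i)
  have hΦ : Function.Injective Φ := by
    rw [← LinearMap.ker_eq_bot, eq_bot_iff]
    intro f hf
    have hval : ∀ i, f (s i) = 0 := fun i => congrFun (LinearMap.mem_ker.mp hf) i
    have hker : LinearMap.ker f = ⊤ := by
      rw [eq_top_iff, ← hs, Submodule.span_le]
      rintro _ ⟨i, rfl⟩
      exact LinearMap.mem_ker.mpr (hval i)
    simpa [Submodule.mem_bot] using LinearMap.ker_eq_top.mp hker
  have : IsNoetherian R (Fin n → M) := inferInstance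
  have : IsNoetherian R (Module.End R M) := isNoetherian_of_injective Φ hΦ
  infer_instance

lemma hida_haus {R : Type*} [CommRing R] [IsNoetherianRing R] [IsLocalRing R]
    {M : Type*} [AddCommGroup M] [Module R M] [Module.Finite R M]
    (x : M)
    (hx : ∀ k : ℕ, x ∈ ((IsLocalRing.maximalIdeal R) ^ k • ⊤ : Submodule R M)) : x = 0 := by
  obtain ⟨n, π, hπ⟩ := Module.Finite.exists_fin' R M
  let ψ : ((Fin n → R) ⧸ LinearMap.ker π) ≃ₗ[R] M := π.quotKerEquivOfSurjective hπ
  have hne : IsLocalRing.maximalIdeal R ≠ ⊤ := Ideal.IsMaximal.ne_top inferInstance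
  have hKrull := Ideal.iInf_pow_smul_eq_bot_of_isLocalRing
    (R := R) (M := (Fin n → R) ⧸ LinearMap.ker π) (I := IsLocalRing.maximalIdeal R) hne
  have hmem : ∀ k : ℕ, ψ.symm x ∈
      ((IsLocalRing.maximalIdeal R) ^ k • ⊤ :
        Submodule R ((Fin n → R) ⧸ LinearMap.ker π)) := by
    intro k
    have h1 : (ψ.symm : M →ₗ[R] ((Fin n → R) ⧸ LinearMap.ker π)) x ∈
        ((IsLocalRing.maximalIdeal R) ^ k • ⊤ : Submodule R M).map
          (ψ.symm : M →ₗ[R] ((Fin n → R) ⧸ LinearMap.ker π)) :=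
      Submodule.mem_map_of_mem (hx k)
    rw [Submodule.map_smul''] at h1
    exact Submodule.smul_mono (le_refl _) le_top h1
  have h0 : ψ.symm x ∈ (⨅ k : ℕ, (IsLocalRing.maximalIdeal R) ^ k • ⊤ :
      Submodule R ((Fin n → R) ⧸ LinearMap.ker π)) :=
    Submodule.mem_iInf _ |>.mpr hmem
  rw [hKrull, Submodule.mem_bot] at h0
  have := congrArg ψ h0
  simpa using this

/-- Hida's ordinary projector.  Let `R` be a complete Noetherian local ring with maximal
ideal `m` and finite residue field, `M` a finitely generated `R`-module, and `u` an
`R`-linear endomorphism of `M`.  Then the sequence `(u^{n!})` converges `m`-adically in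
`End_R(M)` to an idempotent `e` commuting with `u`, `u` restricts to a bijection of
`e·M = range e`, and on `(1 - e)·M` the powers of `u` tend to `0` `m`-adically. -/
theorem stmt3 (R : Type*) [CommRing R] [IsNoetherianRing R] [IsLocalRing R]
    [IsAdicComplete (IsLocalRing.maximalIdeal R) R] [Finite (IsLocalRing.ResidueField R)]
    (M : Type*) [AddCommGroup M] [Module R M] [Module.Finite R M]
    (u : Module.End R M) :
    ∃ e : Module.End R M,
      (∀ k : ℕ, ∃ N : ℕ, ∀ n ≥ N,
        u ^ n.factorial - e ∈
          (IsLocalRing.maximalIdeal R ^ k) • (⊤ : Submodule R (Module.End R M))) ∧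
      e * e = e ∧
      u * e = e * u ∧
      Set.BijOn ⇑u (LinearMap.range e : Set M) (LinearMap.range e : Set M) ∧
      ∀ k : ℕ, ∃ N : ℕ, ∀ n ≥ N, ∀ x : M,
        (u ^ n) (x - e x) ∈ (IsLocalRing.maximalIdeal R ^ k) • (⊤ : Submodule R M) := by
  classical
  haveI : Module.Finite R (Module.End R M) := hida_finite_end R M
  set I := IsLocalRing.maximalIdeal R with hIdef
  -- Hausdorff property on End
  have hz : ∀ x : Module.End R M,
      (∀ k : ℕ, x ∈ (I ^ k • ⊤ : Submodule R (Module.End R M))) → x = 0 := by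
    intro x hx
    exact hida_haus x hx
  have hswap : ∀ (k : ℕ) (x y : Module.End R M),
      x - y ∈ (I ^ k • ⊤ : Submodule R (Module.End R M)) →
      y - x ∈ (I ^ k • ⊤ : Submodule R (Module.End R M)) := by
    intro k x y h
    have := neg_mem h
    rwa [neg_sub] at this
  -- combinatorial data from finiteness of the quotients
  have hcomb : ∀ k : ℕ, ∃ i p : ℕ, 0 < p ∧
      ∀ s d : ℕ, i ≤ s → p ∣ d →
        u ^ s - u ^ (s + d) ∈ (I ^ k • ⊤ : Submodule R (Module.End R M)) := by
    intro k
    haveI : Finite (Module.End R M ⧸ (I ^ k • ⊤ : Submodule R (Module.End R M))) :=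
      hida_finite_pow_quot R k (Module.End R M)
    obtain ⟨a, b, hab, hmk⟩ := Finite.exists_ne_map_eq_of_infinite
      (fun n : ℕ => Submodule.Quotient.mk
        (p := (I ^ k • ⊤ : Submodule R (Module.End R M))) (u ^ n))
    suffices hgen : ∀ i j : ℕ, i < j →
        u ^ i - u ^ j ∈ (I ^ k • ⊤ : Submodule R (Module.End R M)) →
        ∃ i' p : ℕ, 0 < p ∧ ∀ s d : ℕ, i' ≤ s → p ∣ d →
          u ^ s - u ^ (s + d) ∈ (I ^ k • ⊤ : Submodule R (Module.End R M)) by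
      rcases hab.lt_or_gt with hlt | hlt
      · exact hgen a b hlt ((Submodule.Quotient.eq _).mp hmk)
      · exact hgen b a hlt ((Submodule.Quotient.eq _).mp hmk.symm)
    intro i j hij hbase
    refine ⟨i, j - i, by omega, ?_⟩
    have hstep : ∀ s, i ≤ s →
        u ^ s - u ^ (s + (j - i)) ∈ (I ^ k • ⊤ : Submodule R (Module.End R M)) := by
      intro s hs
      obtain ⟨c, rfl⟩ := Nat.exists_eq_add_of_le hs
      have h1 : u ^ (i + c) - u ^ (i + c + (j - i)) = u ^ c * (u ^ i - u ^ j) := by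
        rw [mul_sub, ← pow_add, ← pow_add,
          show c + i = i + c from Nat.add_comm _ _,
          show c + j = i + c + (j - i) by omega]
      rw [h1]
      exact hida_mul_mem_left _ hbase
    intro s d hs hd
    obtain ⟨t, rfl⟩ := hd
    induction t with
    | zero => simpa using Submodule.zero_mem _
    | succ t ih =>
      have h2 : u ^ s - u ^ (s + (j - i) * (t + 1)) =
          (u ^ s - u ^ (s + (j - i) * t)) +
          (u ^ (s + (j - i) * t) - u ^ (s + (j - i) * t + (j - i))) := by
        rw [Nat.mul_succ, ← Nat.add_assoc]; abel
      rw [h2]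
      exact add_mem ih (hstep _ (by omega))
  choose ii pp hpp hcong using hcomb
  set N : ℕ → ℕ := fun k => max (ii k) (pp k) with hNdef
  -- congruence of factorial powers
  have hfact : ∀ k n n' : ℕ, N k ≤ n → N k ≤ n' →
      u ^ n.factorial - u ^ n'.factorial ∈ (I ^ k • ⊤ : Submodule R (Module.End R M)) := by
    have haux : ∀ k n n' : ℕ, N k ≤ n → N k ≤ n' → n ≤ n' →
        u ^ n.factorial - u ^ n'.factorial ∈ (I ^ k • ⊤ : Submodule R (Module.End R M)) := by
      intro k n n' hn hn' hnn
      have h1 : n.factorial ≤ n'.factorial := Nat.factorial_le hnn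
      have hd : pp k ∣ n'.factorial - n.factorial :=
        Nat.dvd_sub (Nat.dvd_factorial (hpp k) (le_trans (le_max_right _ _) hn'))
          (Nat.dvd_factorial (hpp k) (le_trans (le_max_right _ _) hn))
      have hi : ii k ≤ n.factorial :=
        le_trans (le_trans (le_max_left _ _) hn) (Nat.self_le_factorial n)
      have := hcong k n.factorial (n'.factorial - n.factorial) hi hd
      rwa [show n.factorial + (n'.factorial - n.factorial) = n'.factorial by omega] at this
    intro k n n' hn hn'
    rcases le_total n n' with h | h
    · exact haux k n n' hn hn' h
    · exact hswap k _ _ (haux k n' n hn' hn h)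
  -- monotone exhaustion
  set S : ℕ → ℕ := fun k => ∑ j ∈ Finset.range (k + 1), N j with hSdef
  have hSmono : ∀ {k l : ℕ}, k ≤ l → S k ≤ S l := by
    intro k l hkl
    exact Finset.sum_le_sum_of_subset (Finset.range_subset_range.mpr (by omega))
  have hSN : ∀ k, N k ≤ S k := by
    intro k
    exact Finset.single_le_sum (f := N) (fun _ _ => Nat.zero_le _)
      (Finset.self_mem_range_succ k)
  -- the idempotent e
  obtain ⟨e, he⟩ := hida_prec I (Module.End R M) (fun k => u ^ (S k).factorial)
    (fun {a b} hab => hfact a (S b) (S a) (le_trans (hSN a) (hSmono hab)) (hSN a))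
  have hek : ∀ k, e - u ^ (S k).factorial ∈ (I ^ k • ⊤ : Submodule R (Module.End R M)) :=
    fun k => hswap k _ _ (he k)
  have hppSdvd : ∀ k, pp k ∣ (S k).factorial := fun k =>
    Nat.dvd_factorial (hpp k) (le_trans (le_max_right _ _) (hSN k))
  have hiiS : ∀ k, ii k ≤ (S k).factorial := fun k =>
    le_trans (le_trans (le_max_left _ _) (hSN k)) (Nat.self_le_factorial _)
  -- idempotency
  have hee : e * e = e := by
    rw [← sub_eq_zero]
    apply hz
    intro k
    set F := (S k).factorial with hF
    have h1 : e * e - u ^ (F + F) ∈ (I ^ k • ⊤ : Submodule R (Module.End R M)) := by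
      have := hida_mul_sub_mem (hek k) (hek k)
      rwa [← pow_add] at this
    have h3 : u ^ (F + F) - u ^ F ∈ (I ^ k • ⊤ : Submodule R (Module.End R M)) :=
      hswap k _ _ (hcong k F F (hiiS k) (hppSdvd k))
    have hsplit : e * e - e = (e * e - u ^ (F + F)) + ((u ^ (F + F) - u ^ F) + (u ^ F - e)) := by
      abel
    rw [hsplit]
    exact add_mem h1 (add_mem h3 (he k))
  -- commutation
  have hcomm : u * e = e * u := by
    rw [← sub_eq_zero]
    apply hz
    intro k
    set F := (S k).factorial with hF
    have hsplit : u * e - e * u = u * (e - u ^ F) + (u ^ F - e) * u := by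
      rw [mul_sub, sub_mul, ← pow_succ, ← pow_succ']; abel
    rw [hsplit]
    exact add_mem (hida_mul_mem_left u (hek k)) (hida_mul_mem_right u (he k))
  -- the partial inverse v
  have hvc : ∀ {a b : ℕ}, a ≤ b →
      u ^ (2 * (S b).factorial - 1) - u ^ (2 * (S a).factorial - 1) ∈
        (I ^ a • ⊤ : Submodule R (Module.End R M)) := by
    intro a b hab
    have h1 : (S a).factorial ≤ (S b).factorial := Nat.factorial_le (hSmono hab)
    have h2 : 1 ≤ (S a).factorial := Nat.factorial_pos _
    have hi : ii a ≤ 2 * (S a).factorial - 1 := by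
      have := hiiS a; omega
    have hd : pp a ∣ 2 * (S b).factorial - 2 * (S a).factorial :=
      Nat.dvd_sub
        (Dvd.dvd.mul_left ((hppSdvd a).trans (Nat.factorial_dvd_factorial (hSmono hab))) 2)
        (Dvd.dvd.mul_left (hppSdvd a) 2)
    have h3 := hcong a (2 * (S a).factorial - 1)
      (2 * (S b).factorial - 2 * (S a).factorial) hi hd
    rw [show 2 * (S a).factorial - 1 + (2 * (S b).factorial - 2 * (S a).factorial)
        = 2 * (S b).factorial - 1 by omega] at h3
    exact hswap a _ _ h3
  obtain ⟨v, hv⟩ := hida_prec I (Module.End R M)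
    (fun k => u ^ (2 * (S k).factorial - 1)) (fun {a b} hab => hvc hab)
  have hvk : ∀ k, v - u ^ (2 * (S k).factorial - 1) ∈
      (I ^ k • ⊤ : Submodule R (Module.End R M)) := fun k => hswap k _ _ (hv k)
  -- u * v = e
  have huv : u * v = e := by
    rw [← sub_eq_zero]
    apply hz
    intro k
    set F := (S k).factorial with hF
    have hF1 : 1 ≤ F := Nat.factorial_pos _
    have hexp : u * u ^ (2 * F - 1) = u ^ (F + F) := by
      rw [← pow_succ']
      congr 1
      omega
    have h1 : u * v - u ^ (F + F) ∈ (I ^ k • ⊤ : Submodule R (Module.End R M)) := by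
      have h0 := hida_mul_mem_left u (hvk k)
      rwa [mul_sub, hexp] at h0
    have h2 : u ^ (F + F) - u ^ F ∈ (I ^ k • ⊤ : Submodule R (Module.End R M)) :=
      hswap k _ _ (hcong k F F (hiiS k) (hppSdvd k))
    have hsplit : u * v - e = (u * v - u ^ (F + F)) + ((u ^ (F + F) - u ^ F) + (u ^ F - e)) := by
      abel
    rw [hsplit]
    exact add_mem h1 (add_mem h2 (he k))
  -- v * u = e
  have hvu : v * u = e := by
    rw [← sub_eq_zero]
    apply hz
    intro k
    set F := (S k).factorial with hF
    have hF1 : 1 ≤ F := Nat.factorial_pos _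
    have hexp : u ^ (2 * F - 1) * u = u ^ (F + F) := by
      rw [← pow_succ]
      congr 1
      omega
    have h1 : v * u - u ^ (F + F) ∈ (I ^ k • ⊤ : Submodule R (Module.End R M)) := by
      have h0 := hida_mul_mem_right u (hvk k)
      rwa [sub_mul, hexp] at h0
    have h2 : u ^ (F + F) - u ^ F ∈ (I ^ k • ⊤ : Submodule R (Module.End R M)) :=
      hswap k _ _ (hcong k F F (hiiS k) (hppSdvd k))
    have hsplit : v * u - e = (v * u - u ^ (F + F)) + ((u ^ (F + F) - u ^ F) + (u ^ F - e)) := by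
      abel
    rw [hsplit]
    exact add_mem h1 (add_mem h2 (he k))
  -- e * v = v * e
  have hev : e * v = v * e := by
    rw [← sub_eq_zero]
    apply hz
    intro k
    set F := (S k).factorial with hF
    have h1 : e * v - u ^ F * u ^ (2 * F - 1) ∈ (I ^ k • ⊤ : Submodule R (Module.End R M)) :=
      hida_mul_sub_mem (hek k) (hvk k)
    have h2 : u ^ (2 * F - 1) * u ^ F - v * e ∈ (I ^ k • ⊤ : Submodule R (Module.End R M)) :=
      hida_mul_sub_mem (hv k) (he k)
    have hmid : u ^ F * u ^ (2 * F - 1) = u ^ (2 * F - 1) * u ^ F := by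
      rw [← pow_add, ← pow_add, Nat.add_comm]
    have hsplit : e * v - v * e =
        (e * v - u ^ F * u ^ (2 * F - 1)) + (u ^ (2 * F - 1) * u ^ F - v * e) := by
      rw [hmid]; abel
    rw [hsplit]
    exact add_mem h1 h2
  -- assemble
  refine ⟨e, ?_, hee, hcomm, ?_, ?_⟩
  · -- convergence
    intro k
    refine ⟨N k, fun n hn => ?_⟩
    have h1 := hfact k n (S k) hn (hSN k)
    have h2 := he k
    have h3 := add_mem h1 h2
    rwa [sub_add_sub_cancel] at h3
  · -- bijectivity on the range of e
    have hkey : ∀ z, v (u (e z)) = e z := by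
      intro z
      have h1 : v (u (e z)) = (v * u) (e z) := rfl
      rw [h1, hvu, ← Module.End.mul_apply, hee]
    have hkey' : ∀ z, u (v (e z)) = e z := by
      intro z
      have h1 : u (v (e z)) = (u * v) (e z) := rfl
      rw [h1, huv, ← Module.End.mul_apply, hee]
    refine ⟨?_, ?_, ?_⟩
    · rintro x ⟨y, rfl⟩
      exact ⟨u y, by rw [← Module.End.mul_apply, ← hcomm, Module.End.mul_apply]⟩
    · rintro x ⟨x', rfl⟩ y ⟨y', rfl⟩ hxy
      calc e x' = v (u (e x')) := (hkey x').symm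
        _ = v (u (e y')) := by rw [hxy]
        _ = e y' := hkey y'
    · rintro y ⟨z, rfl⟩
      refine ⟨v (e z), ⟨v z, ?_⟩, hkey' z⟩
      show e (v z) = v (e z)
      rw [← Module.End.mul_apply, ← Module.End.mul_apply, hev]
  · -- powers of u tend to 0 on (1 - e) M
    intro k
    refine ⟨ii k, fun n hn x => ?_⟩
    set F := (S k).factorial with hF
    have hF1 : u ^ n - u ^ (n + F) ∈ (I ^ k • ⊤ : Submodule R (Module.End R M)) :=
      hcong k n F hn (hppSdvd k)
    have hF2 : u ^ (n + F) - u ^ n * e ∈ (I ^ k • ⊤ : Submodule R (Module.End R M)) := by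
      have h0 := hida_mul_mem_left (u ^ n) (he k)
      rwa [mul_sub, ← pow_add] at h0
    have hFm : u ^ n - u ^ n * e ∈ (I ^ k • ⊤ : Submodule R (Module.End R M)) := by
      have h0 := add_mem hF1 hF2
      rwa [sub_add_sub_cancel] at h0
    have h1 := hida_apply_mem hFm x
    have heq : (u ^ n - u ^ n * e) x = (u ^ n) (x - e x) := by
      rw [LinearMap.sub_apply, Module.End.mul_apply, map_sub]
    rwa [heq] at h1
end

section
/- Let O be a complete discrete valuation ring with maximal ideal m and fraction field of characteristic zero, and let f ∈ O[[X]] be a nonzero formal power series. Then the set {a ∈ m : f(a) = 0} of zeros of f in the maximal ideal is finite. -/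
open IsLocalRing Polynomial

section Aux

variable {O : Type*} [CommRing O] [IsDomain O] [IsDiscreteValuationRing O]

private lemma aux_cancel {b : O} (hb : b ≠ 0) :
    ∃ w : ℕ, ∀ (k : ℕ) (x : O), b * x ∈ maximalIdeal O ^ k →
      x ∈ maximalIdeal O ^ (k - w) := by
  obtain ⟨ϖ, hϖ⟩ := IsDiscreteValuationRing.exists_irreducible O
  obtain ⟨w, u, hu⟩ := IsDiscreteValuationRing.eq_unit_mul_pow_irreducible hb hϖ
  refine ⟨w, fun k x hx => ?_⟩
  rw [hϖ.maximalIdeal_eq, Ideal.span_singleton_pow, Ideal.mem_span_singleton] at hx ⊢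
  rcases le_or_gt k w with h | h
  · simp [Nat.sub_eq_zero_of_le h]
  · have h1 : ϖ ^ w * ϖ ^ (k - w) ∣ ϖ ^ w * ((u : O) * x) := by
      rw [← pow_add, Nat.add_sub_cancel' h.le]
      calc ϖ ^ k ∣ b * x := hx
        _ = ϖ ^ w * ((u : O) * x) := by rw [hu]; ring
    have h2 : ϖ ^ (k - w) ∣ (u : O) * x :=
      (mul_dvd_mul_iff_left (pow_ne_zero w hϖ.ne_zero)).mp h1
    exact (Units.dvd_mul_left).mp h2

private lemma aux_prod_coeff : ∀ (n : ℕ) (a : Fin n → O), (∀ i, a i ∈ maximalIdeal O) →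
    ∀ j, (∏ i, (X - Polynomial.C (a i))).coeff j ∈ maximalIdeal O ^ (n - j) := by
  intro n
  induction n with
  | zero => intro a _ j; simp [Ideal.one_eq_top]
  | succ n ih =>
    intro a ha j
    rcases le_or_gt (n + 1) j with hj | hj
    · simp [Nat.sub_eq_zero_of_le hj, Ideal.one_eq_top]
    rw [Fin.prod_univ_succ]
    set D := ∏ i : Fin n, (X - Polynomial.C (a i.succ)) with hD
    have hDc : ∀ m, D.coeff m ∈ maximalIdeal O ^ (n - m) :=
      ih (fun i => a i.succ) (fun i => ha i.succ) 
    rw [sub_mul, coeff_sub, coeff_C_mul]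
    cases j with
    | zero =>
      have hX : (X * D).coeff 0 = 0 := by simp [Polynomial.mul_coeff_zero]
      rw [hX, zero_sub]
      refine neg_mem ?_
      have := Ideal.mul_mem_mul (ha 0) (hDc 0)
      rwa [Nat.sub_zero, ← pow_succ'] at this
    | succ m =>
      rw [Polynomial.coeff_X_mul]
      have h1 : D.coeff m ∈ maximalIdeal O ^ (n + 1 - (m + 1)) := by
        simpa using hDc m
      have h2 : a 0 * D.coeff (m + 1) ∈ maximalIdeal O ^ (n + 1 - (m + 1)) := by
        have := Ideal.mul_mem_mul (ha 0) (hDc (m + 1))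
        rw [← pow_succ'] at this
        exact Ideal.pow_le_pow_right (by omega) this
      exact sub_mem h1 h2

private lemma aux_coeff_X_sub_C_mul {a0 : O} {D : O[X]} {I : Ideal O}
    (hD : ∀ j, D.coeff j ∈ I) (j : ℕ) : ((X - Polynomial.C a0) * D).coeff j ∈ I := by
  rw [sub_mul, coeff_sub, coeff_C_mul]
  refine sub_mem ?_ (Ideal.mul_mem_left _ _ (hD j))
  cases j with
  | zero => simp [Polynomial.mul_coeff_zero]
  | succ m => rw [Polynomial.coeff_X_mul]; exact hD m

private lemma aux_key : ∀ (n : ℕ) (a : Fin n → O), Function.Injective a →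
    ∃ C0 : ℕ, ∀ (k : ℕ) (P : O[X]), (∀ i, P.eval (a i) ∈ maximalIdeal O ^ k) →
      ∃ Q : O[X], ∀ j,
        (P - (∏ i, (X - Polynomial.C (a i))) * Q).coeff j ∈ maximalIdeal O ^ (k - C0) := by
  intro n
  induction n with
  | zero =>
    intro a _
    exact ⟨0, fun k P _ => ⟨P, fun j => by simp⟩⟩
  | succ n ih =>
    intro a hinj
    obtain ⟨C', hC'⟩ := ih (a ∘ Fin.succ) (hinj.comp (Fin.succ_injective n))
    have hne : ∀ i : Fin n, a i.succ - a 0 ≠ 0 := by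
      intro i h
      exact (Fin.succ_ne_zero i) (hinj (sub_eq_zero.mp h))
    choose w hw using fun i : Fin n => aux_cancel (hne i)
    set W := Finset.univ.sup w with hW
    refine ⟨C' + W, fun k P hP => ?_⟩
    obtain ⟨Q₁, hQ₁⟩ := Polynomial.X_sub_C_dvd_sub_C_eval (a := a 0) (p := P)
    have heval : ∀ i : Fin n, Q₁.eval ((a ∘ Fin.succ) i) ∈ maximalIdeal O ^ (k - W) := by
      intro i
      have h1 : (a i.succ - a 0) * Q₁.eval (a i.succ) ∈ maximalIdeal O ^ k := by
        have h2 := congrArg (Polynomial.eval (a i.succ)) hQ₁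
        simp only [eval_sub, eval_mul, eval_C, eval_X] at h2
        rw [← h2]
        exact sub_mem (hP i.succ) (hP 0)
      have h3 := hw i k _ h1
      exact Ideal.pow_le_pow_right (Nat.sub_le_sub_left (Finset.le_sup (Finset.mem_univ i)) k) h3
    obtain ⟨Q, hQ⟩ := hC' (k - W) Q₁ heval
    refine ⟨Q, fun j => ?_⟩
    have key : P - (∏ i, (X - Polynomial.C (a i))) * Q
        = Polynomial.C (P.eval (a 0))
          + (X - Polynomial.C (a 0))
            * (Q₁ - (∏ i : Fin n, (X - Polynomial.C (a i.succ))) * Q) := by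
      rw [Fin.prod_univ_succ]
      linear_combination hQ₁
    rw [key, coeff_add]
    have hCe : (Polynomial.C (P.eval (a 0))).coeff j ∈ maximalIdeal O ^ (k - (C' + W)) := by
      rw [coeff_C]
      split_ifs
      · exact Ideal.pow_le_pow_right (Nat.sub_le k _) (hP 0)
      · exact zero_mem _
    refine add_mem hCe ?_
    refine aux_coeff_X_sub_C_mul (fun m => ?_) j
    have := hQ m
    simp only [Function.comp] at this
    rwa [Nat.sub_sub, Nat.add_comm W C'] at this

end Aux

/-- Let `O` be a complete discrete valuation ring whose fraction field has characteristic
zero, with maximal ideal `m`, and let `f ∈ O[[X]]` be a nonzero formal power series.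
Then the set of zeros of `f` in `m` is finite.  Here `f(a) = 0` for `a ∈ m` is expressed
by saying that the partial sums `Σ_{i<n} c_i a^i` converge to `0` in the `m`-adic
topology. -/
theorem stmt4 (O : Type*) [CommRing O] [IsDomain O] [IsDiscreteValuationRing O]
    [IsAdicComplete (IsLocalRing.maximalIdeal O) O] [CharZero O]
    (f : PowerSeries O) (hf : f ≠ 0) :
    {a : O | a ∈ IsLocalRing.maximalIdeal O ∧
      ∀ k : ℕ, ∃ N : ℕ, ∀ n ≥ N,
        (∑ i ∈ Finset.range n, PowerSeries.coeff i f * a ^ i) ∈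
          IsLocalRing.maximalIdeal O ^ k}.Finite := by
  set S := {a : O | a ∈ IsLocalRing.maximalIdeal O ∧
      ∀ k : ℕ, ∃ N : ℕ, ∀ n ≥ N,
        (∑ i ∈ Finset.range n, PowerSeries.coeff i f * a ^ i) ∈
          IsLocalRing.maximalIdeal O ^ k} with hSdef
  by_contra hS
  -- zeros give small truncated evaluations
  have htrunc : ∀ a ∈ S, ∀ k : ℕ,
      (∑ i ∈ Finset.range k, PowerSeries.coeff i f * a ^ i) ∈ maximalIdeal O ^ k := by
    rintro a ⟨ham, hz⟩ k
    obtain ⟨N, hN⟩ := hz k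
    have h1 : (∑ i ∈ Finset.range (max N k), PowerSeries.coeff i f * a ^ i)
        ∈ maximalIdeal O ^ k := hN _ (le_max_left _ _)
    have h2 : (∑ i ∈ Finset.range (max N k), PowerSeries.coeff i f * a ^ i)
        - (∑ i ∈ Finset.range k, PowerSeries.coeff i f * a ^ i) ∈ maximalIdeal O ^ k := by
      rw [← Finset.sum_Ico_eq_sub _ (le_max_right N k)]
      refine Submodule.sum_mem _ (fun i hi => ?_)
      have hik : k ≤ i := (Finset.mem_Ico.mp hi).1
      have : a ^ i ∈ maximalIdeal O ^ k :=
        Ideal.pow_le_pow_right hik (Ideal.pow_mem_pow ham i)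
      exact Ideal.mul_mem_left _ _ this
    have := sub_mem h1 h2
    simpa using this
  -- pick a nonzero coefficient and its valuation
  have hex : ∃ e : ℕ, PowerSeries.coeff e f ≠ 0 := by
    by_contra h
    push_neg at h
    exact hf (PowerSeries.ext fun n => by simp [h])
  obtain ⟨e, he⟩ := hex
  obtain ⟨ϖ, hϖ⟩ := IsDiscreteValuationRing.exists_irreducible O
  obtain ⟨v, u, hu⟩ := IsDiscreteValuationRing.eq_unit_mul_pow_irreducible he hϖ
  have hce : PowerSeries.coeff e f ∉ maximalIdeal O ^ (v + 1) := by
    rw [hϖ.maximalIdeal_eq, Ideal.span_singleton_pow, Ideal.mem_span_singleton, hu]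
    intro hdvd
    have h1 : ϖ ^ v * ϖ ∣ ϖ ^ v * (u : O) := by
      rw [← pow_succ]
      calc ϖ ^ (v + 1) ∣ (u : O) * ϖ ^ v := hdvd
        _ = ϖ ^ v * (u : O) := mul_comm _ _
    have h2 : ϖ ∣ (u : O) :=
      (mul_dvd_mul_iff_left (pow_ne_zero v hϖ.ne_zero)).mp h1
    exact hϖ.not_isUnit (isUnit_of_dvd_unit h2 u.isUnit)
  -- extract e + v + 1 distinct zeros
  set n := e + (v + 1) with hn
  have hSinf : S.Infinite := hS
  set emb := hSinf.natEmbedding with hemb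
  set a : Fin n → O := fun i => (emb (i : ℕ) : S).1 with ha
  have hinj : Function.Injective a := by
    intro i j h
    have : emb (i : ℕ) = emb (j : ℕ) := Subtype.coe_injective h
    exact Fin.val_injective (emb.injective this)
  have hmem : ∀ i, a i ∈ S := fun i => (emb (i : ℕ)).2
  obtain ⟨C0, hkey⟩ := aux_key n a hinj
  set k := C0 + n + e + 1 with hk
  -- evaluate truncation
  have hevaltrunc : ∀ x : O, (f.trunc k).eval x
      = ∑ i ∈ Finset.range k, PowerSeries.coeff i f * x ^ i := by
    intro x
    rw [PowerSeries.trunc]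
    exact PowerSeries.eval₂_trunc_eq_sum_range x (RingHom.id O) k f
  have hP : ∀ i, (f.trunc k).eval (a i) ∈ maximalIdeal O ^ k := by
    intro i
    rw [hevaltrunc]
    exact htrunc (a i) (hmem i) k
  obtain ⟨Q, hQ⟩ := hkey k (f.trunc k) hP
  have h1 := hQ e
  rw [coeff_sub] at h1
  have hte : (f.trunc k).coeff e = PowerSeries.coeff e f := by
    rw [PowerSeries.coeff_trunc]
    rw [if_pos (by omega)]
  have h2 : (f.trunc k).coeff e - ((∏ i, (X - Polynomial.C (a i))) * Q).coeff e
      ∈ maximalIdeal O ^ (v + 1) := by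
    refine Ideal.pow_le_pow_right ?_ h1
    omega
  have h3 : ((∏ i, (X - Polynomial.C (a i))) * Q).coeff e ∈ maximalIdeal O ^ (v + 1) := by
    rw [Polynomial.coeff_mul]
    refine Submodule.sum_mem _ (fun p hp => ?_)
    have hp1 : p.1 ≤ e := Finset.HasAntidiagonal.antidiagonal.fst_le hp
    have hc : (∏ i, (X - Polynomial.C (a i))).coeff p.1 ∈ maximalIdeal O ^ (n - p.1) :=
      aux_prod_coeff n a (fun i => (hmem i).1) p.1
    have hle : maximalIdeal O ^ (n - p.1) ≤ maximalIdeal O ^ (v + 1) :=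
      Ideal.pow_le_pow_right (by omega)
    exact Ideal.mul_mem_right _ _ (hle hc)
  have : PowerSeries.coeff e f ∈ maximalIdeal O ^ (v + 1) := by
    have := add_mem h2 h3
    rwa [sub_add_cancel, hte] at this
  exact hce this
end

section
/- Let R be a Noetherian local ring with residue field k, and let C: C⁰ →^{d⁰} C¹ →^{d¹} C² be a complex (d¹ ∘ d⁰ = 0) of finite free R-modules. Suppose that after applying − ⊗_R k the resulting complex of k-vector spaces has vanishing cohomology in degrees 0 and 2, i.e. d⁰ ⊗ k is injective and d¹ ⊗ k is surjective. Then H⁰(C) = 0, H²(C) = 0, and H¹(C) = ker(d¹)/im(d⁰) is a free R-module of rank equal to dim_k H¹(C ⊗_R k). -/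
open IsLocalRing TensorProduct LinearMap

/-- Helper instance (port): lets instance search find the `AddCommGroup` structure on
`k ⊗[R] M` for a field `k`, which the current elaborator no longer finds when forming the
quotient of the kernel of a base-changed map. It is the library instance
`TensorProduct.addCommGroup`, so nothing changes in meaning. -/
instance stmt16TensorAddCommGroup {R k M : Type*} [CommRing R] [Field k] [Algebra R k]
    [AddCommGroup M] [Module R M] : AddCommGroup (TensorProduct R k M) :=
  TensorProduct.addCommGroup

/-- Let `R` be a Noetherian local ring with residue field `k`, and
`C : C⁰ → C¹ → C²` a complex of finite free `R`-modules.  If after applying `− ⊗_R k`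
the resulting complex of `k`-vector spaces has vanishing cohomology in degrees 0 and 2
(i.e. `d⁰ ⊗ k` is injective and `d¹ ⊗ k` is surjective), then `H⁰(C) = 0`, `H²(C) = 0`,
and `H¹(C) = ker d¹ / im d⁰` is a free `R`-module of rank `dim_k H¹(C ⊗_R k)`. -/
theorem stmt16 (R : Type*) [CommRing R] [IsNoetherianRing R] [IsLocalRing R]
    (C0 C1 C2 : Type*) [AddCommGroup C0] [AddCommGroup C1] [AddCommGroup C2]
    [Module R C0] [Module R C1] [Module R C2]
    [Module.Free R C0] [Module.Finite R C0] [Module.Free R C1] [Module.Finite R C1]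
    [Module.Free R C2] [Module.Finite R C2]
    (d0 : C0 →ₗ[R] C1) (d1 : C1 →ₗ[R] C2) (hc : d1 ∘ₗ d0 = 0)
    (hinj : Function.Injective (LinearMap.baseChange (IsLocalRing.ResidueField R) d0))
    (hsurj : Function.Surjective (LinearMap.baseChange (IsLocalRing.ResidueField R) d1)) :
    LinearMap.ker d0 = ⊥ ∧
    LinearMap.range d1 = ⊤ ∧
    Module.Free R
      (LinearMap.ker d1 ⧸ (LinearMap.range d0).comap (LinearMap.ker d1).subtype) ∧
    Module.finrank R
        (LinearMap.ker d1 ⧸ (LinearMap.range d0).comap (LinearMap.ker d1).subtype) =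
      Module.finrank (IsLocalRing.ResidueField R)
        (LinearMap.ker (LinearMap.baseChange (IsLocalRing.ResidueField R) d1) ⧸
          (LinearMap.range (LinearMap.baseChange (IsLocalRing.ResidueField R) d0)).comap
            (LinearMap.ker
              (LinearMap.baseChange (IsLocalRing.ResidueField R) d1)).subtype) := by
  set k := IsLocalRing.ResidueField R with hk
  -- d0 is a split injection
  have hinj' : Function.Injective (d0.lTensor k) := by
    rwa [← LinearMap.baseChange_eq_ltensor]
  obtain ⟨l', hl'⟩ :=
    (IsLocalRing.split_injective_iff_lTensor_residueField_injective d0).mpr hinj'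
  have hd0inj : Function.Injective d0 :=
    Function.HasLeftInverse.injective ⟨l', LinearMap.congr_fun hl'⟩
  -- d1 is surjective (Nakayama)
  have hd1surj : Function.Surjective d1 := by
    rw [← LinearMap.range_eq_top, ← Submodule.Quotient.subsingleton_iff,
      ← IsLocalRing.subsingleton_tensorProduct (R := R)]
    refine (subsingleton_iff_forall_eq 0).mpr fun z ↦ ?_
    obtain ⟨x, rfl⟩ := LinearMap.lTensor_surjective k
      (Submodule.mkQ_surjective (LinearMap.range d1)) z
    obtain ⟨y, hy⟩ := hsurj x
    obtain ⟨y, rfl⟩ : ∃ y, d1.lTensor k y = x :=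
      ⟨y, (congrFun (LinearMap.baseChange_eq_ltensor (f := d1)) y).symm.trans hy⟩
    rw [← LinearMap.comp_apply, ← LinearMap.lTensor_comp]
    have : (LinearMap.range d1).mkQ ∘ₗ d1 = 0 := by
      ext v; simp
    rw [this, LinearMap.lTensor_zero, LinearMap.zero_apply]
  -- split the surjection d1
  obtain ⟨s, hs⟩ := Module.projective_lifting_property d1 LinearMap.id hd1surj
  have hex1 : Function.Exact (LinearMap.ker d1).subtype d1 := d1.exact_subtype_ker_map
  obtain ⟨e1, he1⟩ := (hex1.splitSurjectiveEquiv (Submodule.injective_subtype _)) ⟨s, hs⟩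
  haveI hker_fin : Module.Finite R (LinearMap.ker d1) := by
    haveI : Module.Finite R (LinearMap.ker d1 × C2) := Module.Finite.equiv e1
    exact Module.Finite.of_surjective (LinearMap.fst R _ C2) Prod.fst_surjective
  haveI hker_proj : Module.Projective R (LinearMap.ker d1) := by
    refine Module.Projective.of_split (LinearMap.ker d1).subtype
      ((LinearMap.fst R _ C2) ∘ₗ e1.toLinearMap) ?_
    ext x
    have h := LinearMap.congr_fun he1.1 x
    simp only [LinearMap.comp_apply, LinearEquiv.coe_coe] at h ⊢
    rw [h]
    simp
  haveI : Module.FinitePresentation R (LinearMap.ker d1) :=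
    Module.finitePresentation_of_projective _ _
  haveI hker_free : Module.Free R (LinearMap.ker d1) := Module.free_of_flat_of_isLocalRing
  -- the second splitting
  have hsub : LinearMap.range d0 ≤ LinearMap.ker d1 := by
    rintro _ ⟨x, rfl⟩
    simpa using LinearMap.congr_fun hc x
  set d0' : C0 →ₗ[R] LinearMap.ker d1 :=
    d0.codRestrict _ (fun x => hsub ⟨x, rfl⟩) with hd0'
  have hN : (LinearMap.range d0).comap (LinearMap.ker d1).subtype = LinearMap.range d0' :=
    (LinearMap.range_codRestrict _ _ _).symm
  have hex2 : Function.Exact d0' (LinearMap.range d0').mkQ := d0'.exact_map_mkQ_range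
  have hleft : (l' ∘ₗ (LinearMap.ker d1).subtype) ∘ₗ d0' = LinearMap.id := by
    ext x
    exact LinearMap.congr_fun hl' x
  obtain ⟨e2, he2⟩ := (hex2.splitInjectiveEquiv (Submodule.mkQ_surjective _)) ⟨_, hleft⟩
  haveI hH_proj : Module.Projective R (LinearMap.ker d1 ⧸ LinearMap.range d0') := by
    refine Module.Projective.of_split (e2.symm ∘ₗ LinearMap.inr R C0 _)
      ((LinearMap.snd R C0 _) ∘ₗ e2.toLinearMap) ?_
    ext x
    simp
  haveI : Module.FinitePresentation R (LinearMap.ker d1 ⧸ LinearMap.range d0') :=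
    Module.finitePresentation_of_projective _ _
  haveI hH_free : Module.Free R (LinearMap.ker d1 ⧸ LinearMap.range d0') :=
    Module.free_of_flat_of_isLocalRing
  -- R-side rank computations
  have hrk1 : Module.finrank R C1
      = Module.finrank R (LinearMap.ker d1) + Module.finrank R C2 := by
    rw [e1.finrank_eq, Module.finrank_prod]
  have hrk2 : Module.finrank R (LinearMap.ker d1)
      = Module.finrank R C0 + Module.finrank R (LinearMap.ker d1 ⧸ LinearMap.range d0') := by
    rw [e2.finrank_eq, Module.finrank_prod]
  -- k-side rank computations
  have hsub' : LinearMap.range (d0.baseChange k) ≤ LinearMap.ker (d1.baseChange k) := by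
    rintro _ ⟨x, rfl⟩
    have h0 : (d1.baseChange k) ∘ₗ (d0.baseChange k) = 0 := by
      rw [← LinearMap.baseChange_comp, hc]
      ext v
      simp
    simpa using LinearMap.congr_fun h0 x
  have hK : Module.finrank k (k ⊗[R] C2)
      + Module.finrank k (LinearMap.ker (d1.baseChange k)) = Module.finrank k (k ⊗[R] C1) := by
    have h := LinearMap.finrank_range_add_finrank_ker (d1.baseChange k)
    rwa [LinearMap.range_eq_top.mpr hsurj, finrank_top] at h
  have hN' : Module.finrank k
        ((LinearMap.range (d0.baseChange k)).comap (LinearMap.ker (d1.baseChange k)).subtype)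
      = Module.finrank k (k ⊗[R] C0) := by
    rw [(Submodule.comapSubtypeEquivOfLe hsub').finrank_eq]
    exact LinearMap.finrank_range_of_inj hinj
  have hQ := Submodule.finrank_quotient_add_finrank
    ((LinearMap.range (d0.baseChange k)).comap (LinearMap.ker (d1.baseChange k)).subtype)
  rw [hN'] at hQ
  have hb0 : Module.finrank k (k ⊗[R] C0) = Module.finrank R C0 := Module.finrank_baseChange
  have hb1 : Module.finrank k (k ⊗[R] C1) = Module.finrank R C1 := Module.finrank_baseChange
  have hb2 : Module.finrank k (k ⊗[R] C2) = Module.finrank R C2 := Module.finrank_baseChange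
  refine ⟨LinearMap.ker_eq_bot.mpr hd0inj, LinearMap.range_eq_top.mpr hd1surj, ?_, ?_⟩
  · rw [hN]; exact hH_free
  · rw [hN]
    show _ = Module.finrank k (LinearMap.ker (d1.baseChange k) ⧸
      (LinearMap.range (d0.baseChange k)).comap (LinearMap.ker (d1.baseChange k)).subtype)
    omega
end
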